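/- For every function f : ℝ × ℝ → ℝ and every integer n ≥ 2, one has S_n(f) = S_{n−1}(σ*f) + S_{n−1}(τ*f), where (σ*f)(x,y) = f(x+y, y) and (τ*f)(x,y) = f(x, x+y). -/
import Mathlib


/-- The Stern array: `stern n k` is the entry `s(n,k)` of the Stern array,
with `s(1,1) = 1`, `s(1,k) = 0` for `k ≠ 1`, and
`s(n,2k) = s(n-1,k)`, `s(n,2k+1) = s(n-1,k) + s(n-1,k+1)`. -/
def stern : ℕ → ℤ → ℕ
  | 0, _ => 0
  | 1, k => if k = 1 then 1 else 0
  | n + 2, k =>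
    if k % 2 = 0 then stern (n + 1) (k / 2)
    else stern (n + 1) ((k - 1) / 2) + stern (n + 1) ((k + 1) / 2)

/-- `S n f = ∑_{k=0}^{2^n - 1} f(s(n,k), s(n,k+1))`. -/
noncomputable def S (n : ℕ) (f : ℝ × ℝ → ℝ) : ℝ :=
  ∑ k ∈ Finset.range (2 ^ n), f ((stern n (k : ℤ) : ℝ), (stern n ((k : ℤ) + 1) : ℝ))

lemma stern_even (n : ℕ) (j : ℤ) : stern (n + 2) (2 * j) = stern (n + 1) j := by
  have h1 : (2 * j) % 2 = 0 := Int.mul_emod_right 2 j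
  have h2 : (2 * j) / 2 = j := by omega
  simp [stern, h1, h2]

lemma stern_odd (n : ℕ) (j : ℤ) :
    stern (n + 2) (2 * j + 1) = stern (n + 1) j + stern (n + 1) (j + 1) := by
  have h1 : (2 * j + 1) % 2 = 1 := by omega
  have h2 : (2 * j + 1 - 1) / 2 = j := by omega
  have h3 : (2 * j + 1 + 1) / 2 = j + 1 := by omega
  simp [stern, h1, h2, h3]

lemma sum_range_two_mul (N : ℕ) (g : ℕ → ℝ) :
    ∑ k ∈ Finset.range (2 * N), g k =
      ∑ j ∈ Finset.range N, (g (2 * j) + g (2 * j + 1)) := by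
  induction N with
  | zero => simp
  | succ N ih =>
    have : 2 * (N + 1) = (2 * N + 1) + 1 := by ring
    rw [this, Finset.sum_range_succ, Finset.sum_range_succ, ih, Finset.sum_range_succ]
    ring

/-- For every `f : ℝ × ℝ → ℝ` and every `n ≥ 2`,
`S n f = S (n-1) (σ* f) + S (n-1) (τ* f)` where `(σ* f)(x,y) = f(x+y,y)` and
`(τ* f)(x,y) = f(x,x+y)`. -/
theorem S_recurrence (f : ℝ × ℝ → ℝ) (n : ℕ) (hn : 2 ≤ n) :
    S n f = S (n - 1) (fun p => f (p.1 + p.2, p.2)) +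
      S (n - 1) (fun p => f (p.1, p.1 + p.2)) := by
  obtain ⟨m, rfl⟩ : ∃ m, n = m + 2 := ⟨n - 2, by omega⟩
  have hsub : m + 2 - 1 = m + 1 := rfl
  rw [hsub]
  unfold S
  have hp : 2 ^ (m + 2) = 2 * 2 ^ (m + 1) := by ring
  rw [hp, sum_range_two_mul, ← Finset.sum_add_distrib]
  apply Finset.sum_congr rfl
  intro j _
  have c1 : ((2 * j : ℕ) : ℤ) = 2 * (j : ℤ) := by push_cast; ring
  have c2 : ((2 * j + 1 : ℕ) : ℤ) = 2 * (j : ℤ) + 1 := by push_cast; ring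
  have c4 : 2 * (j : ℤ) + 1 + 1 = 2 * ((j : ℤ) + 1) := by ring
  rw [c1, c2, c4, stern_even, stern_odd, stern_even]
  push_cast
  ring
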